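/- Let V be an n-dimensional real inner product space with n ≥ 2, let R be an algebraic curvature tensor on V, and fix an orthonormal basis (e_1,…,e_n). Define ‖R‖² = Σ_{i,j,k,l} R(e_i,e_j,e_k,e_l)², P(x,y) = Σ_{i,j,k} R(x,e_i,e_j,e_k)·R(y,e_i,e_j,e_k), and Q(x,y,z,w) = Σ_{i,j} R(x,e_i,y,e_j)·R(z,e_i,w,e_j). Assume R is Einstein, i.e. there is K ∈ ℝ with Σ_i R(x,e_i,y,e_i) = K⟨x,y⟩ for all x,y ∈ V, and assume there is C ∈ ℝ such that −3‖R‖² − 6·P(u,u) + 2·Q(u,u,u,u) = C for every unit vector u ∈ V. Then for every unit vector u ∈ V, Q(u,u,u,u) = −(3/2)‖R‖² + 2K²/(n+3) − (n+1)C/(2(n+3)); in particular Q(u,u,u,u) (the trace of the square of the Jacobi operator R_u) is independent of the unit vector u. Moreover ‖R‖² = n·(2K² − (n+2)C)/(3(n+1)(n+3)). -/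

import Mathlib

open scoped RealInnerProductSpace

namespace Stmt4Aux

variable {n : ℕ} {V : Type*} [NormedAddCommGroup V] [InnerProductSpace ℝ V]

/-- The quadrilinear form `Q(a,b,c,d) = ∑_{j,k} R(a,e_j,b,e_k) R(c,e_j,d,e_k)`. -/
def Q4 (R : V →ₗ[ℝ] V →ₗ[ℝ] V →ₗ[ℝ] V →ₗ[ℝ] ℝ) (e : Fin n → V) (a b c d : V) : ℝ :=
  ∑ j, ∑ k, R a (e j) b (e k) * R c (e j) d (e k)

/-- The bilinear form `P(x,y) = ∑_{i,j,k} R(x,e_i,e_j,e_k) R(y,e_i,e_j,e_k)`. -/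
def Pb (R : V →ₗ[ℝ] V →ₗ[ℝ] V →ₗ[ℝ] V →ₗ[ℝ] ℝ) (e : Fin n → V) (x y : V) : ℝ :=
  ∑ i, ∑ j, ∑ k, R x (e i) (e j) (e k) * R y (e i) (e j) (e k)

variable (R : V →ₗ[ℝ] V →ₗ[ℝ] V →ₗ[ℝ] V →ₗ[ℝ] ℝ) (e : Fin n → V)

lemma Q4_add1 (a a' b c d : V) :
    Q4 R e (a + a') b c d = Q4 R e a b c d + Q4 R e a' b c d := by
  simp only [Q4, map_add, LinearMap.add_apply, ← Finset.sum_add_distrib]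
  exact Finset.sum_congr rfl fun j _ => Finset.sum_congr rfl fun k _ => by ring

lemma Q4_add2 (a b b' c d : V) :
    Q4 R e a (b + b') c d = Q4 R e a b c d + Q4 R e a b' c d := by
  simp only [Q4, map_add, LinearMap.add_apply, ← Finset.sum_add_distrib]
  exact Finset.sum_congr rfl fun j _ => Finset.sum_congr rfl fun k _ => by ring

lemma Q4_add3 (a b c c' d : V) :
    Q4 R e a b (c + c') d = Q4 R e a b c d + Q4 R e a b c' d := by
  simp only [Q4, map_add, LinearMap.add_apply, ← Finset.sum_add_distrib]
  exact Finset.sum_congr rfl fun j _ => Finset.sum_congr rfl fun k _ => by ring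

lemma Q4_add4 (a b c d d' : V) :
    Q4 R e a b c (d + d') = Q4 R e a b c d + Q4 R e a b c d' := by
  simp only [Q4, map_add, LinearMap.add_apply, ← Finset.sum_add_distrib]
  exact Finset.sum_congr rfl fun j _ => Finset.sum_congr rfl fun k _ => by ring

lemma Q4_sub1 (a a' b c d : V) :
    Q4 R e (a - a') b c d = Q4 R e a b c d - Q4 R e a' b c d := by
  simp only [Q4, map_sub, LinearMap.sub_apply, ← Finset.sum_sub_distrib]
  exact Finset.sum_congr rfl fun j _ => Finset.sum_congr rfl fun k _ => by rw [sub_eq_add_neg a a', ← neg_one_smul ℝ a', map_add, map_smul]; simp only [LinearMap.add_apply, LinearMap.smul_apply, smul_eq_mul]; ring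

lemma Q4_sub2 (a b b' c d : V) :
    Q4 R e a (b - b') c d = Q4 R e a b c d - Q4 R e a b' c d := by
  simp only [Q4, map_sub, LinearMap.sub_apply, ← Finset.sum_sub_distrib]
  exact Finset.sum_congr rfl fun j _ => Finset.sum_congr rfl fun k _ => by ring

lemma Q4_sub3 (a b c c' d : V) :
    Q4 R e a b (c - c') d = Q4 R e a b c d - Q4 R e a b c' d := by
  simp only [Q4, map_sub, LinearMap.sub_apply, ← Finset.sum_sub_distrib]
  exact Finset.sum_congr rfl fun j _ => Finset.sum_congr rfl fun k _ => by rw [sub_eq_add_neg c c', ← neg_one_smul ℝ c', map_add, map_smul]; simp only [LinearMap.add_apply, LinearMap.smul_apply, smul_eq_mul]; ring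

lemma Q4_sub4 (a b c d d' : V) :
    Q4 R e a b c (d - d') = Q4 R e a b c d - Q4 R e a b c d' := by
  simp only [Q4, map_sub, LinearMap.sub_apply, ← Finset.sum_sub_distrib]
  exact Finset.sum_congr rfl fun j _ => Finset.sum_congr rfl fun k _ => by ring

lemma Q4_smul1 (t : ℝ) (a b c d : V) : Q4 R e (t • a) b c d = t * Q4 R e a b c d := by
  simp only [Q4, map_smul, LinearMap.smul_apply, smul_eq_mul, Finset.mul_sum]
  exact Finset.sum_congr rfl fun j _ => Finset.sum_congr rfl fun k _ => by ring

lemma Q4_smul2 (t : ℝ) (a b c d : V) : Q4 R e a (t • b) c d = t * Q4 R e a b c d := by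
  simp only [Q4, map_smul, LinearMap.smul_apply, smul_eq_mul, Finset.mul_sum]
  exact Finset.sum_congr rfl fun j _ => Finset.sum_congr rfl fun k _ => by ring

lemma Q4_smul3 (t : ℝ) (a b c d : V) : Q4 R e a b (t • c) d = t * Q4 R e a b c d := by
  simp only [Q4, map_smul, LinearMap.smul_apply, smul_eq_mul, Finset.mul_sum]
  exact Finset.sum_congr rfl fun j _ => Finset.sum_congr rfl fun k _ => by ring

lemma Q4_smul4 (t : ℝ) (a b c d : V) : Q4 R e a b c (t • d) = t * Q4 R e a b c d := by
  simp only [Q4, map_smul, LinearMap.smul_apply, smul_eq_mul, Finset.mul_sum]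
  exact Finset.sum_congr rfl fun j _ => Finset.sum_congr rfl fun k _ => by ring

lemma Pb_add1 (x x' y : V) : Pb R e (x + x') y = Pb R e x y + Pb R e x' y := by
  simp only [Pb, map_add, LinearMap.add_apply, ← Finset.sum_add_distrib]
  exact Finset.sum_congr rfl fun i _ => Finset.sum_congr rfl fun j _ =>
    Finset.sum_congr rfl fun k _ => by ring

lemma Pb_add2 (x y y' : V) : Pb R e x (y + y') = Pb R e x y + Pb R e x y' := by
  simp only [Pb, map_add, LinearMap.add_apply, ← Finset.sum_add_distrib]
  exact Finset.sum_congr rfl fun i _ => Finset.sum_congr rfl fun j _ =>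
    Finset.sum_congr rfl fun k _ => by ring

lemma Pb_sub1 (x x' y : V) : Pb R e (x - x') y = Pb R e x y - Pb R e x' y := by
  simp only [Pb, map_sub, LinearMap.sub_apply, ← Finset.sum_sub_distrib]
  exact Finset.sum_congr rfl fun i _ => Finset.sum_congr rfl fun j _ =>
    Finset.sum_congr rfl fun k _ => by rw [sub_eq_add_neg x x', ← neg_one_smul ℝ x', map_add, map_smul]; simp only [LinearMap.add_apply, LinearMap.smul_apply, smul_eq_mul]; ring

lemma Pb_sub2 (x y y' : V) : Pb R e x (y - y') = Pb R e x y - Pb R e x y' := by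
  simp only [Pb, map_sub, LinearMap.sub_apply, ← Finset.sum_sub_distrib]
  exact Finset.sum_congr rfl fun i _ => Finset.sum_congr rfl fun j _ =>
    Finset.sum_congr rfl fun k _ => by rw [sub_eq_add_neg y y', ← neg_one_smul ℝ y', map_add, map_smul]; simp only [LinearMap.add_apply, LinearMap.smul_apply, smul_eq_mul]; ring

lemma Pb_smul1 (t : ℝ) (x y : V) : Pb R e (t • x) y = t * Pb R e x y := by
  simp only [Pb, map_smul, LinearMap.smul_apply, smul_eq_mul, Finset.mul_sum]
  exact Finset.sum_congr rfl fun i _ => Finset.sum_congr rfl fun j _ =>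
    Finset.sum_congr rfl fun k _ => by ring

lemma Pb_smul2 (t : ℝ) (x y : V) : Pb R e x (t • y) = t * Pb R e x y := by
  simp only [Pb, map_smul, LinearMap.smul_apply, smul_eq_mul, Finset.mul_sum]
  exact Finset.sum_congr rfl fun i _ => Finset.sum_congr rfl fun j _ =>
    Finset.sum_congr rfl fun k _ => by ring

lemma Pb_comm (x y : V) : Pb R e x y = Pb R e y x := by
  exact Finset.sum_congr rfl fun i _ => Finset.sum_congr rfl fun j _ =>
    Finset.sum_congr rfl fun k _ => by ring

end Stmt4Aux

namespace Stmt4Aux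

variable {ι M : Type*} [Fintype ι] [AddCommMonoid M]

lemma sum_rot3 (f : ι → ι → ι → M) :
    (∑ i, ∑ j, ∑ k, f k i j) = ∑ k, ∑ i, ∑ j, f k i j := by
  calc (∑ i, ∑ j, ∑ k, f k i j) = ∑ i, ∑ k, ∑ j, f k i j :=
        Finset.sum_congr rfl fun i _ => Finset.sum_comm
    _ = ∑ k, ∑ i, ∑ j, f k i j := Finset.sum_comm

lemma sum_rot4 (f : ι → ι → ι → ι → M) :
    (∑ i, ∑ j, ∑ k, ∑ l, f i j k l) = ∑ j, ∑ k, ∑ l, ∑ i, f i j k l := by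
  calc (∑ i, ∑ j, ∑ k, ∑ l, f i j k l) = ∑ j, ∑ i, ∑ k, ∑ l, f i j k l :=
        Finset.sum_comm
    _ = ∑ j, ∑ k, ∑ i, ∑ l, f i j k l :=
        Finset.sum_congr rfl fun j _ => Finset.sum_comm
    _ = ∑ j, ∑ k, ∑ l, ∑ i, f i j k l :=
        Finset.sum_congr rfl fun j _ => Finset.sum_congr rfl fun k _ => Finset.sum_comm

end Stmt4Aux

set_option maxHeartbeats 4000000 in
open Stmt4Aux in
/-- For an Einstein algebraic curvature tensor `R` on an `n`-dimensional real inner product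
space (`n ≥ 2`) such that `−3‖R‖² − 6 P(u,u) + 2 Q(u,u,u,u) = C` for every unit vector `u`,
one has `Q(u,u,u,u) = −(3/2)‖R‖² + 2K²/(n+3) − (n+1)C/(2(n+3))` for every unit vector `u`,
and `‖R‖² = n(2K² − (n+2)C)/(3(n+1)(n+3))`. -/
theorem stmt_4 (n : ℕ) (hn : 2 ≤ n) (V : Type*) [NormedAddCommGroup V]
    [InnerProductSpace ℝ V] [FiniteDimensional ℝ V] (hdim : Module.finrank ℝ V = n)
    (e : OrthonormalBasis (Fin n) ℝ V)
    (R : V →ₗ[ℝ] V →ₗ[ℝ] V →ₗ[ℝ] V →ₗ[ℝ] ℝ)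
    (hanti : ∀ x y z w : V, R x y z w = - R y x z w)
    (hpair : ∀ x y z w : V, R x y z w = R z w x y)
    (hbianchi : ∀ x y z w : V, R x y z w + R y z x w + R z x y w = 0)
    (K C : ℝ)
    (hEinstein : ∀ x y : V, (∑ i, R x (e i) y (e i)) = K * ⟪x, y⟫)
    (hC : ∀ u : V, ‖u‖ = 1 →
      -3 * (∑ i, ∑ j, ∑ k, ∑ l, (R (e i) (e j) (e k) (e l)) ^ 2)
        - 6 * (∑ i, ∑ j, ∑ k, R u (e i) (e j) (e k) * R u (e i) (e j) (e k))
        + 2 * (∑ i, ∑ j, R u (e i) u (e j) * R u (e i) u (e j)) = C) :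
    (∀ u : V, ‖u‖ = 1 →
      (∑ i, ∑ j, R u (e i) u (e j) * R u (e i) u (e j)) =
        -(3/2) * (∑ i, ∑ j, ∑ k, ∑ l, (R (e i) (e j) (e k) (e l)) ^ 2)
          + 2 * K ^ 2 / (n + 3) - (n + 1) * C / (2 * (n + 3))) ∧
    (∑ i, ∑ j, ∑ k, ∑ l, (R (e i) (e j) (e k) (e l)) ^ 2) =
      n * (2 * K ^ 2 - (n + 2) * C) / (3 * (n + 1) * (n + 3)) := by
  set Sv : ℝ := ∑ i, ∑ j, ∑ k, ∑ l, (R (e i) (e j) (e k) (e l)) ^ 2 with hSv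
  -- basic symmetry: antisymmetry in the last two slots
  have hanti' : ∀ x y z w : V, R x y z w = - R x y w z := by
    intro x y z w
    rw [hpair x y z w, hanti z w x y, hpair w z x y]
  have hswap : ∀ x y z w : V, R x y z w = R y x w z := by
    intro x y z w
    rw [hanti x y z w, hanti' y x z w]; ring
  -- Einstein contraction on basis vectors
  have hone := orthonormal_iff_ite.mp e.orthonormal
  have hdelta : ∀ j k, (∑ i, R (e i) (e j) (e i) (e k)) = K * ⟪e j, e k⟫ := by
    intro j k
    have : ∀ i, R (e i) (e j) (e i) (e k) = R (e j) (e i) (e k) (e i) :=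
      fun i => hswap _ _ _ _
    rw [Finset.sum_congr rfl fun i _ => this i, hEinstein (e j) (e k)]
  -- expanding a vector in the basis through R
  have hRsum : ∀ x a b c : V, (∑ i, ⟪x, e i⟫ * R (e i) a b c) = R x a b c := by
    intro x a b c
    conv_rhs => rw [← e.sum_repr' x]
    rw [map_sum, LinearMap.sum_apply, LinearMap.sum_apply, LinearMap.sum_apply]
    exact Finset.sum_congr rfl fun i _ => by
      rw [map_smul, LinearMap.smul_apply, LinearMap.smul_apply, LinearMap.smul_apply,
        smul_eq_mul, real_inner_comm]
  -- hC at unit vectors, phrased with Q4 and Pb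
  have hgU : ∀ v : V, ‖v‖ = 1 →
      2 * Q4 R (⇑e) v v v v - 6 * Pb R (⇑e) v v * ⟪v, v⟫ - (C + 3 * Sv) * ⟪v, v⟫ ^ 2 = 0 := by
    intro v hv
    have h1 : (⟪v, v⟫ : ℝ) = 1 := by rw [real_inner_self_eq_norm_sq, hv, one_pow]
    have h2 : -3 * Sv - 6 * Pb R (⇑e) v v + 2 * Q4 R (⇑e) v v v v = C := hC v hv
    rw [h1]; ring_nf; ring_nf at h2; linarith
  -- the homogeneous quartic vanishes everywhere
  have hg0 : ∀ u : V,
      2 * Q4 R (⇑e) u u u u - 6 * Pb R (⇑e) u u * ⟪u, u⟫ - (C + 3 * Sv) * ⟪u, u⟫ ^ 2 = 0 := by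
    intro u
    by_cases h : u = 0
    · subst h
      simp [Q4, Pb]
    · have hnu : ‖u‖ ≠ 0 := norm_ne_zero_iff.mpr h
      have hv : ‖(‖u‖⁻¹ • u)‖ = 1 := norm_smul_inv_norm h
      have hu' : u = ‖u‖ • (‖u‖⁻¹ • u) := by
        rw [smul_smul, mul_inv_cancel₀ hnu, one_smul]
      rw [hu', Q4_smul1, Q4_smul2, Q4_smul3, Q4_smul4, Pb_smul1, Pb_smul2,
        real_inner_smul_left, real_inner_smul_right]
      linear_combination (‖u‖ : ℝ) ^ 4 * hgU (‖u‖⁻¹ • u) hv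
  -- polarization identity
  have hE : ∀ x v : V,
      4 * Q4 R (⇑e) x x v v + 4 * Q4 R (⇑e) x v x v + 4 * Q4 R (⇑e) x v v x
        + 4 * Q4 R (⇑e) v x x v + 4 * Q4 R (⇑e) v x v x + 4 * Q4 R (⇑e) v v x x
      = 12 * Pb R (⇑e) x x * ⟪v, v⟫ + 12 * Pb R (⇑e) v v * ⟪x, x⟫
        + 24 * (⟪x, v⟫ * Pb R (⇑e) x v) + 24 * (⟪x, v⟫ * Pb R (⇑e) v x)
        + (C + 3 * Sv) * (4 * (⟪x, x⟫ * ⟪v, v⟫)) + (C + 3 * Sv) * (8 * ⟪x, v⟫ ^ 2) := by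
    intro x v
    have h1 := hg0 (x + v)
    have h2 := hg0 (x - v)
    have h3 := hg0 x
    have h4 := hg0 v
    simp only [Q4_add1, Q4_add2, Q4_add3, Q4_add4, Pb_add1, Pb_add2,
      real_inner_add_add_self] at h1
    simp only [Q4_sub1, Q4_sub2, Q4_sub3, Q4_sub4, Pb_sub1, Pb_sub2,
      real_inner_sub_sub_self] at h2
    linear_combination h1 + h2 - 2 * h3 - 2 * h4
  -- contraction lemmas independent of x
  have c7 : (∑ i, Pb R (⇑e) (e i) (e i)) = Sv := by
    simp only [Pb, hSv, pow_two]
  have c11 : (∑ i, (⟪e i, e i⟫ : ℝ)) = (n : ℝ) := by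
    simp [hone]
  -- the key pointwise identity P(x,x) = μ ⟨x,x⟩ (in multiplied form)
  have csum : ∀ x : V,
      12 * ((n : ℝ) + 3) * Pb R (⇑e) x x
        = (8 * K ^ 2 - 12 * Sv - (C + 3 * Sv) * (4 * n + 8)) * ⟪x, x⟫ := by
    intro x
    have hB : ∀ y z w : V, R y z x w = R x z y w - R x y z w := by
      intro y z w
      have h1 := hbianchi x y z w
      have h2 := hanti z x y w
      linarith
    have c1 : (∑ i, Q4 R (⇑e) x x (e i) (e i)) = K ^ 2 * ⟪x, x⟫ := by
      have step : (∑ i, Q4 R (⇑e) x x (e i) (e i))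
          = ∑ j, ∑ k, R x (e j) x (e k) * (∑ i, R (e i) (e j) (e i) (e k)) := by
        simp only [Q4]
        rw [Finset.sum_comm]
        refine Finset.sum_congr rfl fun j _ => ?_
        rw [Finset.sum_comm]
        refine Finset.sum_congr rfl fun k _ => ?_
        rw [Finset.mul_sum]
      rw [step]
      simp only [hdelta, hone, mul_ite, mul_one, mul_zero, Finset.sum_ite_eq,
        Finset.mem_univ, if_true]
      rw [← Finset.sum_mul, hEinstein x x]
      ring
    have c2 : (∑ i, Q4 R (⇑e) (e i) (e i) x x) = K ^ 2 * ⟪x, x⟫ := by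
      have step : (∑ i, Q4 R (⇑e) (e i) (e i) x x)
          = ∑ j, ∑ k, (∑ i, R (e i) (e j) (e i) (e k)) * R x (e j) x (e k) := by
        simp only [Q4]
        rw [Finset.sum_comm]
        refine Finset.sum_congr rfl fun j _ => ?_
        rw [Finset.sum_comm]
        refine Finset.sum_congr rfl fun k _ => ?_
        rw [Finset.sum_mul]
      rw [step]
      simp only [hdelta, hone, mul_ite, mul_one, mul_zero, ite_mul, zero_mul,
        Finset.sum_ite_eq, Finset.mem_univ, if_true]
      rw [← Finset.mul_sum, hEinstein x x]
      ring
    have c3 : (∑ i, Q4 R (⇑e) x (e i) x (e i)) = Pb R (⇑e) x x := by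
      simp only [Q4, Pb]
      exact Finset.sum_comm
    have c4 : (∑ i, Q4 R (⇑e) (e i) x (e i) x) = Pb R (⇑e) x x := by
      have h1 : (∑ i, Q4 R (⇑e) (e i) x (e i) x)
          = ∑ i, ∑ j, ∑ k, R x (e k) (e i) (e j) * R x (e k) (e i) (e j) := by
        simp only [Q4]
        exact Finset.sum_congr rfl fun i _ => Finset.sum_congr rfl fun j _ =>
          Finset.sum_congr rfl fun k _ => by rw [hpair (e i) (e j) x (e k)]
      rw [h1]
      exact sum_rot3 (fun a b c => R x (e a) (e b) (e c) * R x (e a) (e b) (e c))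
    have hsq1 : (∑ i, ∑ j, ∑ k, R x (e j) (e i) (e k) * R x (e j) (e i) (e k))
        = Pb R (⇑e) x x := by
      simp only [Pb]
      exact Finset.sum_comm
    have hPbrfl : (∑ i, ∑ j, ∑ k, R x (e i) (e j) (e k) * R x (e i) (e j) (e k))
        = Pb R (⇑e) x x := rfl
    have hM : 2 * (∑ i, ∑ j, ∑ k, R x (e j) (e i) (e k) * R x (e i) (e j) (e k))
        = Pb R (⇑e) x x := by
      have hbase : (∑ i, ∑ j, ∑ k, R (e i) (e j) x (e k) * R (e i) (e j) x (e k))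
          = Pb R (⇑e) x x := by
        have h1 : (∑ i, ∑ j, ∑ k, R (e i) (e j) x (e k) * R (e i) (e j) x (e k))
            = ∑ i, ∑ j, ∑ k, R x (e k) (e i) (e j) * R x (e k) (e i) (e j) :=
          Finset.sum_congr rfl fun i _ => Finset.sum_congr rfl fun j _ =>
            Finset.sum_congr rfl fun k _ => by rw [hpair (e i) (e j) x (e k)]
        rw [h1]
        exact sum_rot3 (fun a b c => R x (e a) (e b) (e c) * R x (e a) (e b) (e c))
      have h2 : (∑ i, ∑ j, ∑ k, R (e i) (e j) x (e k) * R (e i) (e j) x (e k))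
          = ∑ i, ∑ j, ∑ k, (R x (e j) (e i) (e k) * R x (e j) (e i) (e k)
              - 2 * (R x (e j) (e i) (e k) * R x (e i) (e j) (e k))
              + R x (e i) (e j) (e k) * R x (e i) (e j) (e k)) :=
        Finset.sum_congr rfl fun i _ => Finset.sum_congr rfl fun j _ =>
          Finset.sum_congr rfl fun k _ => by rw [hB (e i) (e j) (e k)]; ring
      simp only [Finset.sum_add_distrib, Finset.sum_sub_distrib, ← Finset.mul_sum] at h2
      rw [hbase, hsq1, hPbrfl] at h2
      linarith
    have c5 : (∑ i, Q4 R (⇑e) x (e i) (e i) x) = Pb R (⇑e) x x / 2 := by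
      have h1 : (∑ i, Q4 R (⇑e) x (e i) (e i) x)
          = ∑ i, ∑ j, ∑ k, (R x (e j) (e i) (e k) * R x (e j) (e i) (e k)
              - R x (e j) (e i) (e k) * R x (e i) (e j) (e k)) := by
        simp only [Q4]
        exact Finset.sum_congr rfl fun i _ => Finset.sum_congr rfl fun j _ =>
          Finset.sum_congr rfl fun k _ => by rw [hB (e i) (e j) (e k)]; ring
      simp only [Finset.sum_sub_distrib] at h1
      rw [hsq1] at h1
      rw [h1]
      linarith [hM]
    have c6 : (∑ i, Q4 R (⇑e) (e i) x x (e i)) = Pb R (⇑e) x x / 2 := by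
      have h1 : (∑ i, Q4 R (⇑e) (e i) x x (e i))
          = ∑ i, ∑ j, ∑ k, (R x (e j) (e i) (e k) * R x (e j) (e i) (e k)
              - R x (e j) (e i) (e k) * R x (e i) (e j) (e k)) := by
        simp only [Q4]
        exact Finset.sum_congr rfl fun i _ => Finset.sum_congr rfl fun j _ =>
          Finset.sum_congr rfl fun k _ => by rw [hB (e i) (e j) (e k)]; ring
      simp only [Finset.sum_sub_distrib] at h1
      rw [hsq1] at h1
      rw [h1]
      linarith [hM]
    have c8 : (∑ i, (⟪x, e i⟫ : ℝ) * Pb R (⇑e) x (e i)) = Pb R (⇑e) x x := by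
      simp only [Pb, Finset.mul_sum]
      rw [sum_rot4 (fun i j k l =>
        (⟪x, e i⟫ : ℝ) * (R x (e j) (e k) (e l) * R (e i) (e j) (e k) (e l)))]
      refine Finset.sum_congr rfl fun j _ => Finset.sum_congr rfl fun k _ =>
        Finset.sum_congr rfl fun l _ => ?_
      rw [show (∑ i, (⟪x, e i⟫ : ℝ) * (R x (e j) (e k) (e l) * R (e i) (e j) (e k) (e l)))
          = R x (e j) (e k) (e l) * ∑ i, (⟪x, e i⟫ : ℝ) * R (e i) (e j) (e k) (e l) by
        rw [Finset.mul_sum]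
        exact Finset.sum_congr rfl fun i _ => by ring]
      rw [hRsum]
    have c9 : (∑ i, (⟪x, e i⟫ : ℝ) * Pb R (⇑e) (e i) x) = Pb R (⇑e) x x := by
      rw [show (∑ i, (⟪x, e i⟫ : ℝ) * Pb R (⇑e) (e i) x)
          = ∑ i, (⟪x, e i⟫ : ℝ) * Pb R (⇑e) x (e i) from
        Finset.sum_congr rfl fun i _ => by rw [Pb_comm]]
      exact c8
    have c10 : (∑ i, (⟪x, e i⟫ : ℝ) ^ 2) = ⟪x, x⟫ := by
      rw [← e.sum_inner_mul_inner x x]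
      refine Finset.sum_congr rfl fun i _ => ?_
      rw [pow_two]
      nth_rewrite 2 [real_inner_comm]
      rfl
    have hsum : (∑ i, (4 * Q4 R (⇑e) x x (e i) (e i) + 4 * Q4 R (⇑e) x (e i) x (e i)
          + 4 * Q4 R (⇑e) x (e i) (e i) x + 4 * Q4 R (⇑e) (e i) x x (e i)
          + 4 * Q4 R (⇑e) (e i) x (e i) x + 4 * Q4 R (⇑e) (e i) (e i) x x))
        = ∑ i, (12 * Pb R (⇑e) x x * ⟪e i, e i⟫ + 12 * Pb R (⇑e) (e i) (e i) * ⟪x, x⟫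
          + 24 * ((⟪x, e i⟫ : ℝ) * Pb R (⇑e) x (e i))
          + 24 * ((⟪x, e i⟫ : ℝ) * Pb R (⇑e) (e i) x)
          + (C + 3 * Sv) * (4 * (⟪x, x⟫ * ⟪e i, e i⟫))
          + (C + 3 * Sv) * (8 * (⟪x, e i⟫ : ℝ) ^ 2)) :=
      Finset.sum_congr rfl fun i _ => hE x (e i)
    simp only [Finset.sum_add_distrib, ← Finset.mul_sum, ← Finset.sum_mul] at hsum
    rw [c1, c2, c3, c4, c5, c6, c7, c8, c9, c10, c11] at hsum
    linear_combination (-1 : ℝ) * hsum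
  have hn3 : ((n : ℝ) + 3) ≠ 0 := by positivity
  have hn1 : ((n : ℝ) + 1) ≠ 0 := by positivity
  constructor
  · intro u hu
    have h1 : (⟪u, u⟫ : ℝ) = 1 := by rw [real_inner_self_eq_norm_sq, hu, one_pow]
    have h2 : -3 * Sv - 6 * Pb R (⇑e) u u + 2 * Q4 R (⇑e) u u u u = C := hC u hu
    have h3 := csum u
    rw [h1, mul_one] at h3
    have hQ : (∑ i, ∑ j, R u (e i) u (e j) * R u (e i) u (e j)) = Q4 R (⇑e) u u u u := rfl
    rw [hQ]
    field_simp
    linear_combination ((n : ℝ) + 3) * h2 + (1 / 2 : ℝ) * h3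
  · have hs := Finset.sum_congr rfl fun (i : Fin n) (_ : i ∈ Finset.univ) => csum (e i)
    simp only [Finset.sum_add_distrib, ← Finset.mul_sum, ← Finset.sum_mul] at hs
    rw [c7, c11] at hs
    field_simp
    linear_combination (1 / 4 : ℝ) * hs
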